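/- Let m ≥ 1 be an integer and Z > 0. Let F : [0,Z] × ℝ^m × ℝ² → ℂ be jointly measurable, with F(z,·,·) ∈ L¹(ℝ^m × ℝ²; ℂ) for each z ∈ [0,Z] and with z ↦ F(z,·,·) continuous from [0,Z] into L¹(ℝ^m × ℝ²; ℂ). Then sup_{z ∈ [0,Z]} ∫_{ℝ^m × ℝ²} | ∫₀^z F(z', u, v) exp( i (z'/ε) |v|² ) dz' | du dv → 0 as ε → 0⁺, where |v| denotes the Euclidean norm of v ∈ ℝ². -/

import Mathlib

open MeasureTheory Filter Set Topology Complex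
open scoped Real ENNReal NNReal InnerProductSpace

noncomputable section

abbrev E2 : Type := EuclideanSpace ℝ (Fin 2)

lemma RL1 (g : ℝ → ℂ) :
    Tendsto (fun lam : ℝ => ∫ t, g t * Complex.exp (Complex.I * ((lam * t : ℝ) : ℂ)))
      atTop (𝓝 0) := by
  have h0 := Real.tendsto_integral_exp_smul_cocompact g
  have hmap : Tendsto (fun lam : ℝ => -(lam / (2 * π))) atTop (cocompact ℝ) := by
    have h : Tendsto (fun lam : ℝ => lam / (2 * π)) atTop atTop :=
      tendsto_id.atTop_div_const (by positivity)
    exact (tendsto_neg_atTop_atBot.comp h).mono_right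
      (by rw [cocompact_eq_atBot_atTop (α := ℝ)]; exact le_sup_left)
  have h1 := h0.comp hmap
  have heq : (fun lam : ℝ => ∫ t, g t * Complex.exp (Complex.I * ((lam * t : ℝ) : ℂ)))
      = (fun w : ℝ => ∫ v : ℝ, Real.fourierChar (-(v * w)) • g v) ∘
        (fun lam : ℝ => -(lam / (2 * π))) := by
    funext lam
    simp only [Function.comp]
    congr 1
    funext t
    rw [Circle.smul_def, Real.fourierChar_apply, mul_comm]
    congr 2
    push_cast
    have hπ : (π : ℂ) ≠ 0 := by exact_mod_cast Real.pi_ne_zero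
    field_simp
  rw [heq]
  exact h1

lemma norm_exp_I_mul (r : ℝ) : ‖Complex.exp (Complex.I * r)‖ = 1 := by
  rw [mul_comm, Complex.norm_exp_ofReal_mul_I]

lemma nnnorm_exp_I_mul (r : ℝ) : ‖Complex.exp (Complex.I * r)‖₊ = 1 :=
  NNReal.eq (by rw [coe_nnnorm, norm_exp_I_mul, NNReal.coe_one])

lemma unifRL (Z : ℝ) (g : ℝ → ℂ) (hg : Integrable g) {δ : ℝ} (hδ : 0 < δ) :
    ∀ᶠ lam in (atTop : Filter ℝ), ∀ z ∈ Icc 0 Z,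
      ‖∫ t in Ioc 0 z, g t * Complex.exp (Complex.I * ((lam * t : ℝ) : ℂ))‖ ≤ δ := by
  set φ : ℝ → ℝ := fun z => ∫ t in (0:ℝ)..z, ‖g t‖ with hφdef
  have hφ : Continuous φ :=
    intervalIntegral.continuous_primitive (fun a b => hg.norm.intervalIntegrable) 0
  have hu := (isCompact_Icc (a := (0:ℝ)) (b := Z)).uniformContinuousOn_of_continuous
    hφ.continuousOn
  obtain ⟨η, hη, hmod⟩ := Metric.uniformContinuousOn_iff.mp hu (δ/2) (by positivity)
  set N := ⌈Z / η⌉₊ with hN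
  have hnode : ∀ j : ℕ, Tendsto
      (fun lam : ℝ => ∫ t in Ioc 0 (min (j * η) Z),
        g t * Complex.exp (Complex.I * ((lam * t : ℝ) : ℂ)))
      atTop (𝓝 0) := by
    intro j
    have h := RL1 ((Ioc (0:ℝ) (min (j * η) Z)).indicator g)
    convert h using 2 with lam
    rw [← integral_indicator measurableSet_Ioc]
    congr 1
    funext t
    by_cases ht : t ∈ Ioc (0:ℝ) (min (j * η) Z) <;>
      simp [Set.indicator_apply, ht]
  have hev : ∀ᶠ lam in (atTop : Filter ℝ), ∀ j ∈ Finset.range (N+1),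
      ‖∫ t in Ioc 0 (min (j * η) Z),
        g t * Complex.exp (Complex.I * ((lam * t : ℝ) : ℂ))‖ ≤ δ/2 := by
    rw [Filter.eventually_all_finset]
    intro j _
    have h := (hnode j).norm
    rw [norm_zero] at h
    exact h.eventually_le_const (by positivity)
  filter_upwards [hev] with lam hlam z hz
  obtain ⟨hz0, hzZ⟩ := hz
  set j := ⌊z / η⌋₊ with hj
  have hs_le : (j : ℝ) * η ≤ z := by
    have h := Nat.floor_le (by positivity : (0:ℝ) ≤ z / η)
    calc (j:ℝ) * η ≤ (z/η) * η := by nlinarith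
    _ = z := by field_simp
  have hz_lt : z - (j:ℝ) * η < η := by
    have h2 : z < ((j:ℝ) + 1) * η := by
      rw [hj]
      calc z = (z/η) * η := by field_simp
      _ < (↑⌊z / η⌋₊ + 1) * η := by nlinarith [Nat.lt_floor_add_one (z / η)]
    nlinarith
  have hjN : j ∈ Finset.range (N+1) := by
    rw [Finset.mem_range, Nat.lt_succ_iff, hj, hN]
    calc ⌊z / η⌋₊ ≤ ⌊Z / η⌋₊ := Nat.floor_mono (by gcongr)
    _ ≤ ⌈Z / η⌉₊ := Nat.floor_le_ceil _
  have hminj : min ((j:ℝ) * η) Z = (j:ℝ) * η := min_eq_left (hs_le.trans hzZ)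
  have hkey := hlam j hjN
  rw [hminj] at hkey
  set s := (j:ℝ) * η with hs
  have hs0 : 0 ≤ s := by positivity
  have hge : Integrable (fun t : ℝ => g t * Complex.exp (Complex.I * ((lam * t : ℝ) : ℂ))) := by
    have hc : Continuous (fun t : ℝ => Complex.exp (Complex.I * ((lam * t : ℝ) : ℂ))) :=
      Complex.continuous_exp.comp (continuous_const.mul
        (Complex.continuous_ofReal.comp (continuous_const.mul continuous_id)))
    have h := hg.bdd_mul hc.aestronglyMeasurable (Filter.Eventually.of_forall fun t => le_of_eq (norm_exp_I_mul _))
    exact h.congr (Filter.Eventually.of_forall fun t => mul_comm _ _)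
  have hsplit : ∫ t in Ioc 0 z, g t * Complex.exp (Complex.I * ((lam * t : ℝ) : ℂ))
      = (∫ t in Ioc 0 s, g t * Complex.exp (Complex.I * ((lam * t : ℝ) : ℂ)))
        + ∫ t in Ioc s z, g t * Complex.exp (Complex.I * ((lam * t : ℝ) : ℂ)) := by
    rw [← setIntegral_union (Set.Ioc_disjoint_Ioc_of_le le_rfl) measurableSet_Ioc
      hge.integrableOn hge.integrableOn, Set.Ioc_union_Ioc_eq_Ioc hs0 hs_le]
  have htail : ‖∫ t in Ioc s z, g t * Complex.exp (Complex.I * ((lam * t : ℝ) : ℂ))‖ ≤ δ/2 := by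
    have h1 : ‖∫ t in Ioc s z, g t * Complex.exp (Complex.I * ((lam * t : ℝ) : ℂ))‖
        ≤ ∫ t in Ioc s z, ‖g t‖ := by
      refine (norm_integral_le_integral_norm _).trans (le_of_eq ?_)
      congr 1; funext t; rw [norm_mul, norm_exp_I_mul, mul_one]
    have h2 : φ z - φ s = ∫ t in Ioc s z, ‖g t‖ := by
      rw [← intervalIntegral.integral_of_le hs_le]
      exact intervalIntegral.integral_interval_sub_left
        hg.norm.intervalIntegrable hg.norm.intervalIntegrable
    have h4 : dist (φ z) (φ s) < δ/2 := by
      refine hmod z ⟨hz0, hzZ⟩ s ⟨hs0, hs_le.trans hzZ⟩ ?_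
      rw [Real.dist_eq, _root_.abs_of_nonneg (by linarith : (0:ℝ) ≤ z - s)]
      linarith
    rw [Real.dist_eq] at h4
    have h5 : φ z - φ s ≤ |φ z - φ s| := le_abs_self _
    linarith [h1]
  calc ‖∫ t in Ioc 0 z, g t * Complex.exp (Complex.I * ((lam * t : ℝ) : ℂ))‖
      ≤ ‖∫ t in Ioc 0 s, g t * Complex.exp (Complex.I * ((lam * t : ℝ) : ℂ))‖
        + ‖∫ t in Ioc s z, g t * Complex.exp (Complex.I * ((lam * t : ℝ) : ℂ))‖ := by
        rw [hsplit]; exact norm_add_le _ _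
  _ ≤ δ/2 + δ/2 := add_le_add hkey htail
  _ = δ := by ring

/-- **oscillatory-phase lemma, quadratic phase.** If `F : [0,Z] → L¹(ℝ^m×ℝ²;ℂ)`
is jointly measurable and continuous in the `L¹` sense, then
`sup_{z∈[0,Z]} ∫ |∫₀^z F(z',u,v) e^{i(z'/ε) |v|²} dz'| du dv → 0` as `ε → 0⁺`. -/
theorem statement7
    (m : ℕ) (hm : 1 ≤ m) (Z : ℝ) (hZ : 0 < Z)
    (F : ℝ → (Fin m → ℝ) × E2 → ℂ)
    (hFmeas : Measurable (Function.uncurry F))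
    (hFint : ∀ z ∈ Icc (0:ℝ) Z, Integrable (F z) (volume : Measure ((Fin m → ℝ) × E2)))
    (hFcont : ∀ z₀ ∈ Icc (0:ℝ) Z,
      Tendsto (fun z : ℝ => ∫ x : (Fin m → ℝ) × E2, ‖F z x - F z₀ x‖)
        (𝓝[Icc (0:ℝ) Z] z₀) (𝓝 0)) :
    Tendsto
      (fun ε : ℝ => ⨆ z ∈ Icc (0:ℝ) Z,
        ∫⁻ x : (Fin m → ℝ) × E2,
          (‖∫ z' in (0:ℝ)..z,
              F z' x * Complex.exp (Complex.I * (((z' / ε) * ‖x.2‖ ^ 2 : ℝ) : ℂ))‖₊ : ℝ≥0∞))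
      (𝓝[>] (0:ℝ)) (𝓝 0) := by
  set e : ℝ → (Fin m → ℝ) × E2 → ℝ → ℂ :=
    fun ε x z' => Complex.exp (Complex.I * (((z' / ε) * ‖x.2‖ ^ 2 : ℝ) : ℂ)) with he
  have hslice : ∀ x : (Fin m → ℝ) × E2, Measurable fun z' : ℝ => F z' x := by
    intro x
    have h : (fun z' : ℝ => F z' x) = Function.uncurry F ∘ fun z' => (z', x) := rfl
    rw [h]
    exact hFmeas.comp (measurable_id.prodMk measurable_const)
  have hswapmeas : Measurable fun p : ((Fin m → ℝ) × E2) × ℝ => F p.2 p.1 := by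
    have h : (fun p : ((Fin m → ℝ) × E2) × ℝ => F p.2 p.1)
        = Function.uncurry F ∘ Prod.swap := rfl
    rw [h]
    exact hFmeas.comp measurable_swap
  -- boundedness of the L¹ norms
  obtain ⟨C, hC⟩ : ∃ C : ℝ, ∀ z ∈ Icc (0:ℝ) Z, ∫ x, ‖F z x‖ ≤ C := by
    set M : ℝ → ℝ := fun z => ∫ x, ‖F z x‖ with hM
    have habs : ∀ z ∈ Icc (0:ℝ) Z, ∀ z₀ ∈ Icc (0:ℝ) Z,
        |M z - M z₀| ≤ ∫ x, ‖F z x - F z₀ x‖ := by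
      intro z hz z₀ hz₀
      have hz1 := hFint z hz
      have hz2 := hFint z₀ hz₀
      have hsubn : Integrable (fun x => ‖F z x - F z₀ x‖)
          (volume : Measure ((Fin m → ℝ) × E2)) := by
        simpa using (hz1.sub hz2).norm
      rw [abs_sub_le_iff]
      constructor
      · have h1 : M z ≤ ∫ x, (‖F z x - F z₀ x‖ + ‖F z₀ x‖) := by
          refine integral_mono hz1.norm (hsubn.add hz2.norm) fun x => ?_
          calc ‖F z x‖ = ‖(F z x - F z₀ x) + F z₀ x‖ := by rw [sub_add_cancel]
          _ ≤ ‖F z x - F z₀ x‖ + ‖F z₀ x‖ := norm_add_le _ _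
        rw [integral_add hsubn hz2.norm] at h1
        linarith
      · have h1 : M z₀ ≤ ∫ x, (‖F z x - F z₀ x‖ + ‖F z x‖) := by
          refine integral_mono hz2.norm (hsubn.add hz1.norm) fun x => ?_
          calc ‖F z₀ x‖ = ‖(F z x - F z₀ x) - F z x‖ := by rw [sub_sub_cancel_left, norm_neg]
          _ ≤ ‖F z x - F z₀ x‖ + ‖F z x‖ := norm_sub_le _ _
        rw [integral_add hsubn hz1.norm] at h1
        linarith
    have hMcont : ContinuousOn M (Icc 0 Z) := by
      intro z₀ hz₀
      rw [ContinuousWithinAt, tendsto_iff_dist_tendsto_zero]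
      refine squeeze_zero' (Filter.Eventually.of_forall fun z => dist_nonneg) ?_ (hFcont z₀ hz₀)
      filter_upwards [self_mem_nhdsWithin] with z hz
      rw [Real.dist_eq]
      exact habs z hz z₀ hz₀
    obtain ⟨C, hC⟩ := (isCompact_Icc (a := (0:ℝ)) (b := Z)).exists_bound_of_continuousOn hMcont
    exact ⟨C, fun z hz => (le_abs_self _).trans (by simpa [Real.norm_eq_abs] using hC z hz)⟩
  set bound : (Fin m → ℝ) × E2 → ℝ≥0∞ :=
    fun x => ∫⁻ z' in Ioc (0:ℝ) Z, (‖F z' x‖₊ : ℝ≥0∞) with hbd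
  have hFnn : Measurable fun p : ((Fin m → ℝ) × E2) × ℝ => (‖F p.2 p.1‖₊ : ℝ≥0∞) :=
    hswapmeas.nnnorm.coe_nnreal_ennreal
  have hbound_meas : Measurable bound := hFnn.lintegral_prod_right'
  have hbound_fin : ∫⁻ x, bound x < ⊤ := by
    have hswap : ∫⁻ x : (Fin m → ℝ) × E2, bound x
        = ∫⁻ z' in Ioc (0:ℝ) Z, ∫⁻ x : (Fin m → ℝ) × E2, (‖F z' x‖₊ : ℝ≥0∞) := by
      exact lintegral_lintegral_swap hFnn.aemeasurable
    rw [hswap]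
    have hle : ∫⁻ z' in Ioc (0:ℝ) Z, ∫⁻ x : (Fin m → ℝ) × E2, (‖F z' x‖₊ : ℝ≥0∞)
        ≤ ∫⁻ _ in Ioc (0:ℝ) Z, ENNReal.ofReal C := by
      refine setLIntegral_mono' measurableSet_Ioc fun z' hz' => ?_
      have hint := hFint z' (Set.Ioc_subset_Icc_self hz')
      simp_rw [← enorm_eq_nnnorm]
      rw [← ofReal_integral_norm_eq_lintegral_enorm hint]
      exact ENNReal.ofReal_le_ofReal (hC z' (Set.Ioc_subset_Icc_self hz'))
    refine hle.trans_lt ?_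
    rw [setLIntegral_const]
    exact ENNReal.mul_lt_top ENNReal.ofReal_lt_top (by simp [Real.volume_Ioc] : volume (Ioc (0:ℝ) Z) < ⊤)
  have hae_int : ∀ᵐ x : (Fin m → ℝ) × E2,
      IntegrableOn (fun z' => F z' x) (Ioc (0:ℝ) Z) := by
    filter_upwards [ae_lt_top hbound_meas hbound_fin.ne] with x hx
    exact ⟨(hslice x).aestronglyMeasurable, hx⟩
  have hae_ne : ∀ᵐ x : (Fin m → ℝ) × E2, x.2 ≠ 0 := by
    rw [ae_iff]
    have hset : {x : (Fin m → ℝ) × E2 | ¬ x.2 ≠ 0}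
        = (univ : Set (Fin m → ℝ)) ×ˢ ({0} : Set E2) := by
      ext x
      simp only [Set.mem_setOf_eq, not_not, Set.mem_prod, Set.mem_univ, Set.mem_singleton_iff,
        true_and]
    rw [hset, Measure.volume_eq_prod, Measure.prod_prod, measure_singleton, mul_zero]
  set proj : ℚ → ℝ := fun q => max 0 (min (q:ℝ) Z) with hproj
  have hproj_mem : ∀ q, proj q ∈ Icc (0:ℝ) Z :=
    fun q => ⟨le_max_left _ _, max_le (le_of_lt hZ) (min_le_right _ _)⟩
  set Ψ : ℝ → (Fin m → ℝ) × E2 → ℝ≥0∞ := fun ε x =>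
    ⨆ q : ℚ, (‖∫ z' in Ioc (0:ℝ) (proj q), F z' x * e ε x z'‖₊ : ℝ≥0∞) with hΨ
  have hΨmeas : ∀ ε, Measurable (Ψ ε) := by
    intro ε
    refine Measurable.iSup fun q => ?_
    have hG : StronglyMeasurable fun p : ((Fin m → ℝ) × E2) × ℝ => F p.2 p.1 * e ε p.1 p.2 := by
      refine Measurable.stronglyMeasurable ?_
      refine hswapmeas.mul ?_
      have h : Continuous fun p : ((Fin m → ℝ) × E2) × ℝ =>
          Complex.exp (Complex.I * (((p.2 / ε) * ‖p.1.2‖ ^ 2 : ℝ) : ℂ)) := by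
        refine Complex.continuous_exp.comp (continuous_const.mul
          (Complex.continuous_ofReal.comp ?_))
        exact ((continuous_snd.div_const ε).mul
          ((continuous_norm.comp (continuous_snd.comp continuous_fst)).pow 2))
      exact h.measurable
    exact ((hG.integral_prod_right'
      (ν := volume.restrict (Ioc 0 (proj q)))).measurable.nnnorm).coe_nnreal_ennreal
  have hnorm_e : ∀ ε x z', (‖F z' x * e ε x z'‖₊ : ℝ≥0∞) = (‖F z' x‖₊ : ℝ≥0∞) := by
    intro ε x z'
    have h1 : ‖e ε x z'‖₊ = 1 := nnnorm_exp_I_mul _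
    rw [nnnorm_mul, h1, mul_one]
  have hdom : ∀ ε x, Ψ ε x ≤ bound x := by
    intro ε x
    refine iSup_le fun q => ?_
    refine (enorm_integral_le_lintegral_enorm _).trans ?_
    simp_rw [enorm_eq_nnnorm, hnorm_e]
    exact lintegral_mono_set (Set.Ioc_subset_Ioc_right (hproj_mem q).2)
  -- integrand integrability on Icc for a.e. x
  have hIntegrand : ∀ (ε : ℝ) (x : (Fin m → ℝ) × E2),
      IntegrableOn (fun z' => F z' x) (Ioc (0:ℝ) Z) →
      IntegrableOn (fun z' => F z' x * e ε x z') (Icc (0:ℝ) Z) := by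
    intro ε x hx
    rw [integrableOn_Icc_iff_integrableOn_Ioc]
    have hc : Continuous (fun z' : ℝ => e ε x z') :=
      Complex.continuous_exp.comp (continuous_const.mul
        (Complex.continuous_ofReal.comp ((continuous_id.div_const ε).mul continuous_const)))
    have h := hx.bdd_mul hc.aestronglyMeasurable
      (Filter.Eventually.of_forall fun z' => le_of_eq (norm_exp_I_mul _))
    exact h.congr (Filter.Eventually.of_forall fun z' => mul_comm _ _)
  -- a.e. equality of the `Icc`-sup and the countable sup
  have hΦΨ : ∀ ε : ℝ, (fun x => ⨆ z ∈ Icc (0:ℝ) Z,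
      (‖∫ z' in Ioc (0:ℝ) z, F z' x * e ε x z'‖₊ : ℝ≥0∞)) =ᵐ[volume] Ψ ε := by
    intro ε
    filter_upwards [hae_int] with x hx
    have hcont : ContinuousOn (fun z => ∫ z' in Ioc (0:ℝ) z, F z' x * e ε x z')
        (Icc (0:ℝ) Z) := intervalIntegral.continuousOn_primitive (hIntegrand ε x hx)
    apply le_antisymm
    · refine iSup₂_le fun z hz => ?_
      -- approximate z by rationals
      have hq : ∀ n : ℕ, ∃ q : ℚ, z - 1/(n+1) < (q:ℝ) ∧ (q:ℝ) < z + 1/(n+1) := by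
        intro n
        have hlt : z - 1/(n+1) < z + 1/(n+1) := by
          have : (0:ℝ) < 1/(n+1) := by positivity
          linarith
        exact_mod_cast exists_rat_btwn hlt
      choose q hq1 hq2 using hq
      have htq : Tendsto (fun n : ℕ => (q n : ℝ)) atTop (𝓝 z) := by
        have hub : Tendsto (fun n : ℕ => z + 1/(n+1 : ℝ)) atTop (𝓝 z) := by
          have := tendsto_one_div_add_atTop_nhds_zero_nat (𝕜 := ℝ)
          simpa using tendsto_const_nhds.add this
        have hlb : Tendsto (fun n : ℕ => z - 1/(n+1 : ℝ)) atTop (𝓝 z) := by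
          have := tendsto_one_div_add_atTop_nhds_zero_nat (𝕜 := ℝ)
          simpa using tendsto_const_nhds.sub this
        exact tendsto_of_tendsto_of_tendsto_of_le_of_le hlb hub
          (fun n => (hq1 n).le) (fun n => (hq2 n).le)
      have hprojc : Continuous (fun r : ℝ => max 0 (min r Z)) :=
        continuous_const.max (continuous_id.min continuous_const)
      have hpt : Tendsto (fun n => proj (q n)) atTop (𝓝 z) := by
        have h := (hprojc.tendsto z).comp htq
        rw [show max 0 (min z Z) = z by rw [min_eq_left hz.2, max_eq_right hz.1]] at h
        exact h
      have hptw : Tendsto (fun n => proj (q n)) atTop (𝓝[Icc (0:ℝ) Z] z) :=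
        tendsto_nhdsWithin_iff.mpr ⟨hpt, Filter.Eventually.of_forall fun n => hproj_mem _⟩
      have hh : Tendsto (fun n => ∫ z' in Ioc (0:ℝ) (proj (q n)), F z' x * e ε x z')
          atTop (𝓝 (∫ z' in Ioc (0:ℝ) z, F z' x * e ε x z')) :=
        (hcont z hz).tendsto.comp hptw
      have hh2 : Tendsto
          (fun n => (‖∫ z' in Ioc (0:ℝ) (proj (q n)), F z' x * e ε x z'‖₊ : ℝ≥0∞))
          atTop (𝓝 (‖∫ z' in Ioc (0:ℝ) z, F z' x * e ε x z'‖₊ : ℝ≥0∞)) :=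
        (ENNReal.tendsto_coe.2 hh.nnnorm)
      refine le_of_tendsto hh2 (Filter.Eventually.of_forall fun n => ?_)
      exact le_iSup (fun q => (‖∫ z' in Ioc (0:ℝ) (proj q), F z' x * e ε x z'‖₊ : ℝ≥0∞)) (q n)
    · exact iSup_le fun q => le_iSup₂
        (f := fun z _ => (‖∫ z' in Ioc (0:ℝ) z, F z' x * e ε x z'‖₊ : ℝ≥0∞))
        (proj q) (hproj_mem q)
  -- pointwise convergence along sequences
  have hptwise : ∀ (u : ℕ → ℝ), Tendsto u atTop (𝓝[>] (0:ℝ)) →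
      ∀ᵐ x : (Fin m → ℝ) × E2, Tendsto (fun n => Ψ (u n) x) atTop (𝓝 0) := by
    intro u hu
    filter_upwards [hae_int, hae_ne] with x hx hx2
    have hc : (0:ℝ) < ‖x.2‖ ^ 2 := by
      have := norm_pos_iff.2 hx2
      positivity
    set c := ‖x.2‖ ^ 2 with hcdef
    set g : ℝ → ℂ := (Ioc (0:ℝ) Z).indicator (fun z' => F z' x) with hg
    have hgint : Integrable g := (integrable_indicator_iff measurableSet_Ioc).2 hx
    have hlam : Tendsto (fun n => c / u n) atTop atTop := by
      have h1 : Tendsto (fun ε : ℝ => c / ε) (𝓝[>] (0:ℝ)) atTop := by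
        simpa [div_eq_mul_inv] using (tendsto_inv_nhdsGT_zero (𝕜 := ℝ)).const_mul_atTop hc
      exact h1.comp hu
    refine ENNReal.tendsto_nhds_zero.2 fun δ hδ => ?_
    obtain ⟨δ', hδ'0, hδ'le⟩ : ∃ δ' : ℝ, 0 < δ' ∧ ENNReal.ofReal δ' ≤ δ := by
      rcases eq_or_ne δ ⊤ with h | h
      · exact ⟨1, one_pos, h ▸ le_top⟩
      · exact ⟨δ.toReal, ENNReal.toReal_pos hδ.ne' h,
          le_of_eq (ENNReal.ofReal_toReal h)⟩
    have hev := hlam.eventually (unifRL Z g hgint hδ'0)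
    filter_upwards [hev] with n hn
    refine le_trans (iSup_le fun q => ?_) hδ'le
    have heq2 : ∫ z' in Ioc (0:ℝ) (proj q), F z' x * e (u n) x z'
        = ∫ t in Ioc (0:ℝ) (proj q),
            g t * Complex.exp (Complex.I * (((c / u n) * t : ℝ) : ℂ)) := by
      refine setIntegral_congr_fun measurableSet_Ioc fun t ht => ?_
      have hmem : t ∈ Ioc (0:ℝ) Z := ⟨ht.1, ht.2.trans (hproj_mem q).2⟩
      rw [hg, Set.indicator_of_mem hmem]
      have harg : (t / u n) * c = (c / u n) * t := by ring
      rw [he]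
      simp only []
      rw [harg]
    rw [heq2, ← enorm_eq_nnnorm, ← ofReal_norm]
    exact ENNReal.ofReal_le_ofReal (hn (proj q) (hproj_mem q))
  have hAB : ∀ ε : ℝ, (⨆ z ∈ Icc (0:ℝ) Z, ∫⁻ x : (Fin m → ℝ) × E2,
        (‖∫ z' in (0:ℝ)..z, F z' x * e ε x z'‖₊ : ℝ≥0∞))
      ≤ ∫⁻ x, Ψ ε x := by
    intro ε
    rw [← lintegral_congr_ae (hΦΨ ε)]
    refine iSup₂_le fun z hz => ?_
    refine lintegral_mono fun x => ?_
    rw [intervalIntegral.integral_of_le hz.1]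
    exact le_iSup₂ (f := fun z _ => (‖∫ z' in Ioc (0:ℝ) z, F z' x * e ε x z'‖₊ : ℝ≥0∞)) z hz
  have hB : Tendsto (fun ε => ∫⁻ x, Ψ ε x) (𝓝[>] (0:ℝ)) (𝓝 0) := by
    rw [tendsto_iff_seq_tendsto]
    intro u hu
    have h := tendsto_lintegral_of_dominated_convergence bound (fun n => hΨmeas (u n))
      (fun n => Filter.Eventually.of_forall fun x => hdom (u n) x) hbound_fin.ne
      (hptwise u hu)
    simpa [Function.comp_def] using h
  exact tendsto_of_tendsto_of_tendsto_of_le_of_le tendsto_const_nhds hB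
    (fun ε => zero_le) hAB
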